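/- Proposition 3, part 2 (maps with equivariant frame fields are conjugate-equivariant). Let U : ℝ³ → G be a smooth map, and suppose there exist a constant element A ∈ 𝔤 and smooth maps f_μ : ℝ² → 𝔤 (μ ∈ {x,y,t}) such that U⁻¹∂_μU (x,y,t) = exp(−yA)·f_μ(x,t)·exp(yA) for all (x,y,t) and all μ. Then there exist a constant element L ∈ 𝔤 and a smooth map V : ℝ² → G such that U(x,y,t) = exp(yL)·V(x,t)·exp(yA) for all (x,y,t) ∈ ℝ³; in other words, U is conjugate-translation equivariant with R = A. -/

import Mathlib

/-!
STATEMENT 11 (Proposition 3, part 2): a smooth map `U : ℝ³ → G` whose frame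
field is equivariant, `K_μ(x,y,t) = exp(−yA)·f_μ(x,t)·exp(yA)`, has the
conjugate-equivariant form `U(x,y,t) = exp(yL)·V(x,t)·exp(yA)`.
-/

open scoped BigOperators

attribute [local instance] Matrix.linftyOpNormedAddCommGroup Matrix.linftyOpNormedSpace
  Matrix.linftyOpNormedRing Matrix.linftyOpNormedAlgebra

attribute [local instance] LieRing.ofAssociativeRing

noncomputable section

abbrev Mat (N : ℕ) := Matrix (Fin N) (Fin N) ℝ

/-- Directional derivative. -/
def pd {E F : Type*} [NormedAddCommGroup E] [NormedSpace ℝ E]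
    [NormedAddCommGroup F] [NormedSpace ℝ F] (d : E) (f : E → F) (z : E) : F :=
  fderiv ℝ f z d

/-- The coordinate directions `x, y, t` on `ℝ^{2+1} = ℝ³`. -/
def dir3 : Fin 3 → ℝ × ℝ × ℝ := ![(1, 0, 0), (0, 1, 0), (0, 0, 1)]

/-- The frame field `K_μ = Ψ⁻¹ ∂_μ Ψ` of a map `Ψ : ℝ³ → GL(N,ℝ)`,
in the direction `d`. -/
def Kf {N : ℕ} (Ψ : ℝ × ℝ × ℝ → Mat N) (d : ℝ × ℝ × ℝ) (z : ℝ × ℝ × ℝ) : Mat N :=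
  Ring.inverse (Ψ z) * fderiv ℝ Ψ z d

/-! ### Auxiliary material -/

namespace Prop3Aux

variable {N : ℕ}

/-- `Eb A y = exp (y • A)`. -/
def Eb (A : Mat N) (y : ℝ) : Mat N := NormedSpace.exp (y • A)

lemma Eb_zero (A : Mat N) : Eb A 0 = 1 := by
  simp [Eb, NormedSpace.exp_zero]

lemma Eb_mul_neg (A : Mat N) (y : ℝ) : Eb A y * Eb A (-y) = 1 := by
  rw [Eb, Eb]
  erw [← NormedSpace.exp_add_of_commute (((Commute.refl A).smul_left y).smul_right (-y))]
  simp [NormedSpace.exp_zero]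

lemma Eb_neg_mul (A : Mat N) (y : ℝ) : Eb A (-y) * Eb A y = 1 := by
  simpa using Eb_mul_neg A (-y)

lemma Eb_unit (A : Mat N) (y : ℝ) : IsUnit (Eb A y) :=
  NormedSpace.isUnit_exp (y • A)

lemma Eb_comm (A : Mat N) (y : ℝ) : A * Eb A y = Eb A y * A :=
  (((Commute.refl A).smul_right y).exp_right)

lemma Eb_hasDerivAt (A : Mat N) (y : ℝ) : HasDerivAt (Eb A) (A * Eb A y) y :=
  hasDerivAt_exp_smul_const' A y

lemma Eb_contDiff (A : Mat N) : ContDiff ℝ (⊤ : ℕ∞) (Eb A) := by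
  have h1 : ContDiff ℝ (⊤ : ℕ∞) (fun y : ℝ => y • A) := contDiff_id.smul contDiff_const
  exact contDiff_iff_contDiffAt.2 fun y =>
    ((NormedSpace.exp_analytic (y • A)).contDiffAt).comp y h1.contDiffAt

/-- The `y`-negation functional `z ↦ -z.2.1` as a continuous linear map. -/
def negY : (ℝ × ℝ × ℝ) →L[ℝ] ℝ :=
  -((ContinuousLinearMap.fst ℝ ℝ ℝ).comp (ContinuousLinearMap.snd ℝ ℝ (ℝ × ℝ)))

@[simp] lemma negY_apply (d : ℝ × ℝ × ℝ) : negY d = -d.2.1 := rfl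

/-- Projection `z ↦ (z.1, z.2.2)` as a continuous linear map. -/
def projXT : (ℝ × ℝ × ℝ) →L[ℝ] ℝ × ℝ :=
  (ContinuousLinearMap.fst ℝ ℝ (ℝ × ℝ)).prod
    ((ContinuousLinearMap.snd ℝ ℝ ℝ).comp (ContinuousLinearMap.snd ℝ ℝ (ℝ × ℝ)))

@[simp] lemma projXT_apply (d : ℝ × ℝ × ℝ) : projXT d = (d.1, d.2.2) := rfl

lemma hasFDerivAt_EbY (A : Mat N) (z : ℝ × ℝ × ℝ) :
    HasFDerivAt (fun w : ℝ × ℝ × ℝ => Eb A (-w.2.1))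
      (negY.smulRight (A * Eb A (-z.2.1))) z := by
  have h1 : HasFDerivAt (Eb A)
      (ContinuousLinearMap.smulRight (1 : ℝ →L[ℝ] ℝ) (A * Eb A (-z.2.1))) (-z.2.1) :=
    (Eb_hasDerivAt A (-z.2.1)).hasFDerivAt
  have h2 : HasFDerivAt (fun w : ℝ × ℝ × ℝ => -w.2.1) negY z := negY.hasFDerivAt
  have h3 := h1.comp z h2
  have h8 : negY.smulRight (A * Eb A (-z.2.1))
      = (ContinuousLinearMap.smulRight (1 : ℝ →L[ℝ] ℝ) (A * Eb A (-z.2.1))).comp negY := by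
    apply ContinuousLinearMap.ext
    intro d
    simp
  rw [h8]
  exact h3

/-- The gauge-transformed map `Ũ = U · exp(−yA)`. -/
def Ut (U : ℝ × ℝ × ℝ → Mat N) (A : Mat N) : ℝ × ℝ × ℝ → Mat N :=
  fun z => U z * Eb A (-z.2.1)

/-- The `y`-independent frame fields of `Ũ`. -/
def hh (f : Fin 3 → (ℝ × ℝ → Mat N)) (A : Mat N) (μ : Fin 3) (z : ℝ × ℝ × ℝ) : Mat N :=
  f μ (z.1, z.2.2) - (dir3 μ).2.1 • A

end Prop3Aux

open Prop3Aux

/-- **Proposition 3, part 2: maps with equivariant frame fields are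
conjugate-equivariant.** -/
theorem equivariant_frame_field_implies_conjugate_equivariant
    {N : ℕ}
    -- `G`, a closed subgroup of `GL(N,ℝ)`
    (GSet : Set (Mat N))
    (hG1 : (1 : Mat N) ∈ GSet)
    (hGmul : ∀ a ∈ GSet, ∀ b ∈ GSet, a * b ∈ GSet)
    (hGinv : ∀ a ∈ GSet, IsUnit a ∧ Ring.inverse a ∈ GSet)
    (hGclosed : IsClosed {u : (Mat N)ˣ | (u : Mat N) ∈ GSet})
    -- `𝔤`, the Lie algebra of `G`
    (𝔤 : LieSubalgebra ℝ (Mat N))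
    (hLie : ∀ A : Mat N, A ∈ 𝔤 ↔ ∀ s : ℝ, NormedSpace.exp (s • A) ∈ GSet)
    -- a smooth map `U : ℝ³ → G` with equivariant frame field
    (U : ℝ × ℝ × ℝ → Mat N) (hU : ContDiff ℝ (⊤ : ℕ∞) U) (hUG : ∀ z, U z ∈ GSet)
    (A : Mat N) (hA : A ∈ 𝔤)
    (f : Fin 3 → (ℝ × ℝ → Mat N))
    (hf : ∀ μ, ContDiff ℝ (⊤ : ℕ∞) (f μ)) (hf𝔤 : ∀ μ q, f μ q ∈ 𝔤)
    (hequiv : ∀ μ : Fin 3, ∀ z : ℝ × ℝ × ℝ,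
      Kf U (dir3 μ) z
        = NormedSpace.exp (-(z.2.1 • A)) * f μ (z.1, z.2.2) *
            NormedSpace.exp (z.2.1 • A)) :
    ∃ L ∈ 𝔤, ∃ V : ℝ × ℝ → Mat N,
      ContDiff ℝ (⊤ : ℕ∞) V ∧ (∀ q, V q ∈ GSet) ∧
      ∀ x y t : ℝ,
        U (x, y, t) = NormedSpace.exp (y • L) * V (x, t) * NormedSpace.exp (y • A) := by
  classical
  have hone : ((⊤ : ℕ∞) : WithTop ℕ∞) ≠ 0 := by simp
  -- U is everywhere a unit
  have hUu : ∀ z, IsUnit (U z) := fun z => (hGinv _ (hUG z)).1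
  have hUdiff : Differentiable ℝ U := hU.differentiable hone
  -- the frame field identity, rewritten
  have hDU : ∀ (μ : Fin 3) (z : ℝ × ℝ × ℝ),
      fderiv ℝ U z (dir3 μ)
        = U z * (Eb A (-z.2.1) * f μ (z.1, z.2.2) * Eb A z.2.1) := by
    intro μ z
    have h := hequiv μ z
    rw [Kf] at h
    calc fderiv ℝ U z (dir3 μ)
        = (U z * Ring.inverse (U z)) * fderiv ℝ U z (dir3 μ) := by
          rw [Ring.mul_inverse_cancel _ (hUu z), one_mul]
      _ = U z * (Ring.inverse (U z) * fderiv ℝ U z (dir3 μ)) := by rw [mul_assoc]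
      _ = U z * (Eb A (-z.2.1) * f μ (z.1, z.2.2) * Eb A z.2.1) := by
          rw [h, Eb, Eb, neg_smul]
  -- Ũ and its basic properties
  set W : (ℝ × ℝ × ℝ) → Mat N := fun z => Ring.inverse (Ut U A z) with hWdef
  have hUtC : ContDiff ℝ (⊤ : ℕ∞) (Ut U A) := by
    apply hU.mul
    exact (Eb_contDiff A).comp ((contDiff_fst.comp contDiff_snd).neg)
  have hUtdiff : Differentiable ℝ (Ut U A) := hUtC.differentiable hone
  have hUtu : ∀ z, IsUnit (Ut U A z) := fun z => (hUu z).mul (Eb_unit A (-z.2.1))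
  have hWUt : ∀ z, W z * Ut U A z = 1 := fun z => Ring.inverse_mul_cancel _ (hUtu z)
  have hUtW : ∀ z, Ut U A z * W z = 1 := fun z => Ring.mul_inverse_cancel _ (hUtu z)
  have hWdiff : ∀ z, DifferentiableAt ℝ W z := fun z => (hUtdiff z).inverse (hUtu z)
  -- the frame lemma for Ũ
  have hUtD : ∀ (μ : Fin 3) (z : ℝ × ℝ × ℝ),
      fderiv ℝ (Ut U A) z (dir3 μ) = Ut U A z * hh f A μ z := by
    intro μ z
    have hd := ((hUdiff z).hasFDerivAt.mul' (hasFDerivAt_EbY A z)).fderiv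
    have heq : fderiv ℝ (Ut U A) z = fderiv ℝ (fun w => U w * Eb A (-w.2.1)) z := rfl
    have hd2 : fderiv ℝ (fun w => U w * Eb A (-w.2.1)) z (dir3 μ)
        = U z * ((-(dir3 μ).2.1) • (A * Eb A (-z.2.1))) + fderiv ℝ U z (dir3 μ) * Eb A (-z.2.1) := by
      have h := congrArg (fun L => L (dir3 μ)) hd
      simp only [ContinuousLinearMap.add_apply, ContinuousLinearMap.smul_apply,
        ContinuousLinearMap.smulRight_apply, negY_apply, smul_eq_mul,
        MulOpposite.smul_eq_mul_unop, MulOpposite.unop_op] at h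
      exact h
    rw [heq, hd2]
    rw [hDU μ z]
    have t1 : U z * ((-(dir3 μ).2.1) • (A * Eb A (-z.2.1)))
        = -((dir3 μ).2.1 • (U z * (Eb A (-z.2.1) * A))) := by
      rw [mul_smul_comm, neg_smul, Eb_comm]
    have t2 : U z * (Eb A (-z.2.1) * f μ (z.1, z.2.2) * Eb A z.2.1) * Eb A (-z.2.1)
        = U z * (Eb A (-z.2.1) * f μ (z.1, z.2.2)) := by
      simp only [mul_assoc]
      rw [Eb_mul_neg, mul_one]
    have t3 : Ut U A z * hh f A μ z
        = U z * (Eb A (-z.2.1) * f μ (z.1, z.2.2))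
          - (dir3 μ).2.1 • (U z * (Eb A (-z.2.1) * A)) := by
      show (U z * Eb A (-z.2.1)) * (f μ (z.1, z.2.2) - (dir3 μ).2.1 • A) = _
      simp only [mul_sub, mul_smul_comm, mul_assoc]
    rw [t1, t3]
    rw [t2]
    abel
  -- smoothness of the derivative of Ũ
  have htop1 : ((⊤ : ℕ∞) : WithTop ℕ∞) + 1 ≤ ((⊤ : ℕ∞) : WithTop ℕ∞) := by
    exact_mod_cast le_top
  have hf'C := hUtC.fderiv_right htop1
  have hf'diff : Differentiable ℝ (fderiv ℝ (Ut U A)) := hf'C.differentiable hone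
  -- symmetry of the second derivative
  have hsymm : ∀ z : ℝ × ℝ × ℝ, IsSymmSndFDerivAt ℝ (Ut U A) z := fun z =>
    hUtC.contDiffAt.isSymmSndFDerivAt (by
      have h2 : ((2 : ℕ∞) : WithTop ℕ∞) ≤ ((⊤ : ℕ∞) : WithTop ℕ∞) :=
        by exact_mod_cast (le_top : (2 : ℕ∞) ≤ ⊤)
      simpa using h2)
  -- applying the second derivative
  have happ : ∀ (v : ℝ × ℝ × ℝ) (z d : ℝ × ℝ × ℝ),
      fderiv ℝ (fun w => fderiv ℝ (Ut U A) w v) z d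
        = fderiv ℝ (fderiv ℝ (Ut U A)) z d v := by
    intro v z d
    have h := congrArg (fun L => L d) (fderiv_clm_apply (hf'diff z) (differentiableAt_const v))
    simp at h
    refine h.trans ?_
    have h0 : (fderiv ℝ (Ut U A) z) ((0 : (ℝ × ℝ × ℝ) →L[ℝ] (ℝ × ℝ × ℝ)) d) = 0 := by
      rw [ContinuousLinearMap.zero_apply, map_zero]
    exact (congrArg (· + fderiv ℝ (fderiv ℝ (Ut U A)) z d v) h0).trans (zero_add _)
  -- differentiability of the h-fields and vanishing of their y-derivative
  have hhdiff : ∀ (μ : Fin 3) (z : ℝ × ℝ × ℝ), DifferentiableAt ℝ (hh f A μ) z := by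
    intro μ z
    apply DifferentiableAt.sub _ (differentiableAt_const _)
    exact ((hf μ).differentiable hone (z.1, z.2.2)).comp z projXT.differentiableAt
  have hhD1 : ∀ (μ : Fin 3) (z : ℝ × ℝ × ℝ), fderiv ℝ (hh f A μ) z (dir3 1) = 0 := by
    intro μ z
    have h1 : HasFDerivAt (hh f A μ) ((fderiv ℝ (f μ) (z.1, z.2.2)).comp projXT) z := by
      have h2 := (((hf μ).differentiable hone (z.1, z.2.2)).hasFDerivAt.comp z
        projXT.hasFDerivAt)
      exact h2.sub_const ((dir3 μ).2.1 • A)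
    rw [h1.fderiv]
    have h3 : projXT (dir3 1) = 0 := by simp [dir3, projXT_apply, Prod.ext_iff]
    show (fderiv ℝ (f μ) (z.1, z.2.2)) (projXT (dir3 1)) = 0
    rw [h3, map_zero]
  -- the mixed second derivatives
  have hmix : ∀ (μ : Fin 3) (z : ℝ × ℝ × ℝ),
      fderiv ℝ (fun w => fderiv ℝ (Ut U A) w (dir3 1)) z (dir3 μ)
        = Ut U A z * hh f A 1 z * hh f A μ z := by
    intro μ z
    have hfun : (fun w => fderiv ℝ (Ut U A) w (dir3 μ))
        = fun w => Ut U A w * hh f A μ w := funext fun w => hUtD μ w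
    have e5 : fderiv ℝ (fun w => Ut U A w * hh f A μ w) z (dir3 1)
        = Ut U A z * fderiv ℝ (hh f A μ) z (dir3 1)
          + fderiv ℝ (Ut U A) z (dir3 1) * hh f A μ z := by
      have h := congrArg (fun L => L (dir3 1)) (fderiv_mul' (hUtdiff z) (hhdiff μ z))
      simp only [ContinuousLinearMap.add_apply, ContinuousLinearMap.smul_apply, smul_eq_mul,
        MulOpposite.smul_eq_mul_unop, MulOpposite.unop_op] at h
      exact h
    calc fderiv ℝ (fun w => fderiv ℝ (Ut U A) w (dir3 1)) z (dir3 μ)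
        = fderiv ℝ (fderiv ℝ (Ut U A)) z (dir3 μ) (dir3 1) := happ _ z _
      _ = fderiv ℝ (fderiv ℝ (Ut U A)) z (dir3 1) (dir3 μ) := (hsymm z).eq _ _
      _ = fderiv ℝ (fun w => fderiv ℝ (Ut U A) w (dir3 μ)) z (dir3 1) := (happ _ z _).symm
      _ = fderiv ℝ (fun w => Ut U A w * hh f A μ w) z (dir3 1) := by rw [hfun]
      _ = Ut U A z * hh f A 1 z * hh f A μ z := by
          rw [e5, hhD1 μ z, mul_zero, zero_add, hUtD 1 z]
  -- the Maurer–Cartan quotient M = ∂_y Ũ · Ũ⁻¹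
  set M : (ℝ × ℝ × ℝ) → Mat N := fun z => fderiv ℝ (Ut U A) z (dir3 1) * W z with hMdef
  have hF1diff : ∀ z, DifferentiableAt ℝ (fun w => fderiv ℝ (Ut U A) w (dir3 1)) z :=
    fun z => (hf'diff z).clm_apply (differentiableAt_const _)
  have hMdiff : Differentiable ℝ M := fun z => (hF1diff z).mul (hWdiff z)
  have hWD : ∀ (z d : ℝ × ℝ × ℝ),
      fderiv ℝ W z d = -(W z * fderiv ℝ (Ut U A) z d * W z) := by
    intro z d
    have h4 : W z = (↑(hUtu z).unit⁻¹ : Mat N) := by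
      have h := Ring.inverse_unit (hUtu z).unit
      rw [(hUtu z).unit_spec] at h
      exact h
    have h2 := hasFDerivAt_ringInverse (𝕜 := ℝ) (hUtu z).unit
    rw [(hUtu z).unit_spec] at h2
    have h3 : HasFDerivAt W
        ((-(ContinuousLinearMap.mulLeftRight ℝ (Mat N) ↑(hUtu z).unit⁻¹
            ↑(hUtu z).unit⁻¹)).comp (fderiv ℝ (Ut U A) z)) z :=
      h2.comp z (hUtdiff z).hasFDerivAt
    have h5 := congrArg (fun L => L d) h3.fderiv
    simp [ContinuousLinearMap.comp_apply, ContinuousLinearMap.neg_apply,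
      ContinuousLinearMap.mulLeftRight_apply, ← h4, mul_assoc] at h5 ⊢
    exact h5
  -- M has vanishing derivative
  have hMD : ∀ z, fderiv ℝ M z = 0 := by
    intro z
    have hder : fderiv ℝ M z
        = (fun w => fderiv ℝ (Ut U A) w (dir3 1)) z • fderiv ℝ W z
          + (fderiv ℝ (fun w => fderiv ℝ (Ut U A) w (dir3 1)) z).smulRight (W z) :=
      fderiv_mul' (𝕜 := ℝ) (hF1diff z) (hWdiff z)
    have key : ∀ μ : Fin 3, fderiv ℝ M z (dir3 μ) = 0 := by
      intro μ
      rw [hder]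
      simp only [ContinuousLinearMap.add_apply, ContinuousLinearMap.smul_apply,
        ContinuousLinearMap.smulRight_apply, smul_eq_mul]
      rw [hWD z (dir3 μ), hmix μ z, hUtD 1 z, hUtD μ z]
      have hc : W z * (Ut U A z * hh f A μ z) * W z = hh f A μ z * W z := by
        rw [← mul_assoc, hWUt z, one_mul]
      rw [hc]
      simp [mul_neg, mul_assoc]
    apply ContinuousLinearMap.ext
    intro d
    have hd3 : d = d.1 • dir3 0 + d.2.1 • dir3 1 + d.2.2 • dir3 2 := by
      simp [dir3, Prod.ext_iff]
    rw [ContinuousLinearMap.zero_apply]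
    conv_lhs => rw [hd3]
    rw [map_add, map_add, map_smul, map_smul, map_smul, key 0, key 1, key 2]
    simp
  -- M is constant; call its value L
  have hMconst : ∀ z, M z = M 0 := fun z => is_const_of_fderiv_eq_zero hMdiff hMD z 0
  set L : Mat N := M 0 with hLdef
  -- ∂_y Ũ = L Ũ
  have hMz : ∀ z, fderiv ℝ (Ut U A) z (dir3 1) = L * Ut U A z := by
    intro z
    calc fderiv ℝ (Ut U A) z (dir3 1)
        = fderiv ℝ (Ut U A) z (dir3 1) * (W z * Ut U A z) := by rw [hWUt, mul_one]
      _ = M z * Ut U A z := by rw [← mul_assoc]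
      _ = L * Ut U A z := by rw [hMconst z]
  -- a formula for L
  have hUt0 : Ut U A 0 = U 0 := by
    show U 0 * Eb A (-(0 : ℝ × ℝ × ℝ).2.1) = U 0
    norm_num [Eb_zero]
  have hL : L = U 0 * (f 1 (0, 0) - A) * Ring.inverse (U 0) := by
    rw [hLdef]
    show fderiv ℝ (Ut U A) 0 (dir3 1) * W 0 = _
    rw [hUtD 1 0]
    have hh0 : hh f A 1 0 = f 1 (0, 0) - A := by
      show f 1 ((0 : ℝ × ℝ × ℝ).1, (0 : ℝ × ℝ × ℝ).2.2) - (dir3 1).2.1 • A = _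
      norm_num [dir3]
    have hW0 : W 0 = Ring.inverse (U 0) := by
      show Ring.inverse (Ut U A 0) = _
      rw [hUt0]
    rw [hh0, hW0, hUt0]
  -- L belongs to the Lie algebra
  have hg0 : f 1 (0, 0) - A ∈ 𝔤 := sub_mem (hf𝔤 1 (0, 0)) hA
  have hLmem : L ∈ 𝔤 := by
    rw [hLie]
    intro s
    rw [hL]
    have hs : s • (U 0 * (f 1 (0, 0) - A) * Ring.inverse (U 0))
        = U 0 * (s • (f 1 (0, 0) - A)) * Ring.inverse (U 0) := by
      rw [← smul_mul_assoc, ← mul_smul_comm]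
    rw [hs]
    have hu1 : ((hUu 0).unit : Mat N) = U 0 := (hUu 0).unit_spec
    have hu2 : Ring.inverse (U 0) = (↑(hUu 0).unit⁻¹ : Mat N) := by
      have h := Ring.inverse_unit (hUu 0).unit
      rw [hu1] at h
      exact h
    have hconj : NormedSpace.exp (U 0 * (s • (f 1 (0, 0) - A)) * Ring.inverse (U 0))
        = U 0 * NormedSpace.exp (s • (f 1 (0, 0) - A)) * Ring.inverse (U 0) := by
      have h := NormedSpace.exp_units_conj (hUu 0).unit (s • (f 1 (0, 0) - A))
      rw [hu1, ← hu2] at h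
      exact h
    rw [hconj]
    exact hGmul _ (hGmul _ (hUG 0) _ ((hLie _).1 hg0 s)) _ (hGinv _ (hUG 0)).2
  -- conclusion
  refine ⟨L, hLmem, fun q => U (q.1, 0, q.2), ?_, fun q => hUG _, ?_⟩
  · exact hU.comp (contDiff_fst.prodMk (contDiff_const.prodMk contDiff_snd))
  intro x y t
  -- the ODE argument in the y-variable
  have hφ : ∀ y : ℝ, HasDerivAt (fun y : ℝ => Eb L (-y) * Ut U A (x, y, t)) 0 y := by
    intro y
    have h1 : HasDerivAt (fun y : ℝ => Eb L (-y)) (-(L * Eb L (-y))) y := by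
      have h0 := (Eb_hasDerivAt L (-y)).scomp y (hasDerivAt_neg y)
      simp only [neg_one_smul] at h0
      exact h0
    have hj : HasDerivAt (fun y : ℝ => ((x, y, t) : ℝ × ℝ × ℝ)) ((0 : ℝ), (1 : ℝ), (0 : ℝ)) y :=
      (hasDerivAt_const y x).prodMk ((hasDerivAt_id y).prodMk (hasDerivAt_const y t))
    have h2 : HasDerivAt (fun y : ℝ => Ut U A (x, y, t)) (L * Ut U A (x, y, t)) y := by
      have h3 := (hUtdiff (x, y, t)).hasFDerivAt.comp_hasDerivAt y hj
      have h4 : fderiv ℝ (Ut U A) (x, y, t) ((0 : ℝ), (1 : ℝ), (0 : ℝ))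
          = L * Ut U A (x, y, t) := by
        have h5 := hMz (x, y, t)
        simpa [dir3] using h5
      rw [← h4]
      exact h3
    have h6 := h1.mul h2
    have h7 : Eb L (-y) * (L * Ut U A (x, y, t)) = L * Eb L (-y) * Ut U A (x, y, t) := by
      rw [← mul_assoc, ← Eb_comm]
    have h8 : -(L * Eb L (-y)) * Ut U A (x, y, t) + Eb L (-y) * (L * Ut U A (x, y, t)) = 0 := by
      rw [h7, neg_mul]
      abel
    exact h6.congr_deriv h8
  have hconst : Eb L (-y) * Ut U A (x, y, t) = Eb L (-0) * Ut U A (x, 0, t) :=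
    is_const_of_deriv_eq_zero (fun y => (hφ y).differentiableAt) (fun y => (hφ y).deriv) y 0
  have h0 : Eb L (-0) * Ut U A (x, 0, t) = U (x, 0, t) := by
    show Eb L (-0) * (U (x, 0, t) * Eb A (-(0:ℝ))) = U (x, 0, t)
    norm_num [Eb_zero]
  rw [h0] at hconst
  have hkey : Ut U A (x, y, t) = Eb L y * U (x, 0, t) := by
    calc Ut U A (x, y, t) = (Eb L y * Eb L (-y)) * Ut U A (x, y, t) := by
          rw [Eb_mul_neg, one_mul]
      _ = Eb L y * (Eb L (-y) * Ut U A (x, y, t)) := by rw [mul_assoc]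
      _ = Eb L y * U (x, 0, t) := by rw [hconst]
  have hfin : U (x, y, t) = Ut U A (x, y, t) * Eb A y := by
    show U (x, y, t) = U (x, y, t) * Eb A (-y) * Eb A y
    rw [mul_assoc, Eb_neg_mul, mul_one]
  rw [hfin, hkey]
  rfl

end
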